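/- For a = √5 and h = 1, define f₁(ρ,s) = (5 − 4ρ²)·sin(2√(2/5)·s)/(10√10) and f₂(ρ,s) = (5 − 12ρ²)·cos(2√(2/5)·s)/(40ρ) on the set ρ ≠ 0. Then the point (ρ̃, s̃) = (√(5/12), −π√(5/2)) satisfies f₁(ρ̃, s̃) = 0 and f₂(ρ̃, s̃) = 0, and the Jacobian determinant of the map (ρ,s) ↦ (f₁(ρ,s), f₂(ρ,s)) at (ρ̃, s̃) is nonzero; i.e., (ρ̃, s̃) is a simple zero of the averaged system: ∂f₁/∂ρ·∂f₂/∂s − ∂f₁/∂s·∂f₂/∂ρ ≠ 0 at (ρ̃, s̃). -/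

import Mathlib

open Real in
/-- for `a = √5`, `h = 1`, the point
`(ρ̃, s̃) = (√(5/12), −π√(5/2))` is a simple zero of the averaged system
`f₁(ρ,s) = (5 − 4ρ²) sin(2√(2/5)s)/(10√10)`,
`f₂(ρ,s) = (5 − 12ρ²) cos(2√(2/5)s)/(40ρ)`:
both functions vanish there and the Jacobian determinant of `(f₁,f₂)` with respect to
`(ρ,s)` is nonzero there. -/
theorem simple_zero_a_sqrt5 (f₁ f₂ : ℝ → ℝ → ℝ)
    (hf₁ : ∀ ρ s : ℝ, f₁ ρ s =
      (5 - 4 * ρ ^ 2) * Real.sin (2 * Real.sqrt (2 / 5) * s) / (10 * Real.sqrt 10))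
    (hf₂ : ∀ ρ s : ℝ, f₂ ρ s =
      (5 - 12 * ρ ^ 2) * Real.cos (2 * Real.sqrt (2 / 5) * s) / (40 * ρ))
    (ρt st : ℝ) (hρt : ρt = Real.sqrt (5 / 12)) (hst : st = -π * Real.sqrt (5 / 2)) :
    f₁ ρt st = 0 ∧ f₂ ρt st = 0 ∧
    deriv (fun ρ => f₁ ρ st) ρt * deriv (fun s => f₂ ρt s) st -
      deriv (fun s => f₁ ρt s) st * deriv (fun ρ => f₂ ρ st) ρt ≠ 0 := by
  have hρpos : 0 < ρt := by
    rw [hρt]; positivity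
  have hρ2 : ρt ^ 2 = 5 / 12 := by
    rw [hρt, Real.sq_sqrt (by norm_num : (0:ℝ) ≤ 5/12)]
  have h1 : Real.sqrt (2/5) * Real.sqrt (5/2) = 1 := by
    rw [← Real.sqrt_mul (by norm_num : (0:ℝ) ≤ 2/5)]
    norm_num
  have hcs : 2 * Real.sqrt (2/5) * st = -(2*π) := by
    rw [hst]; linear_combination (-(2*π)) * h1
  have hsin : Real.sin (2 * Real.sqrt (2/5) * st) = 0 := by
    rw [hcs, Real.sin_neg, Real.sin_two_pi, neg_zero]
  have hcos : Real.cos (2 * Real.sqrt (2/5) * st) = 1 := by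
    rw [hcs, Real.cos_neg, Real.cos_two_pi]
  have hnum0 : 5 - 12 * ρt ^ 2 = 0 := by rw [hρ2]; norm_num
  refine ⟨by rw [hf₁, hsin]; ring, by rw [hf₂, hnum0]; ring, ?_⟩
  -- d1 = 0
  have e1 : (fun ρ => f₁ ρ st) = fun _ : ℝ => (0:ℝ) := by
    funext ρ; rw [hf₁, hsin]; ring
  have d1 : deriv (fun ρ => f₁ ρ st) ρt = 0 := by rw [e1]; simp
  -- d2 = 0
  have e2 : (fun s => f₂ ρt s) = fun _ : ℝ => (0:ℝ) := by
    funext s; rw [hf₂, hnum0]; ring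
  have d2 : deriv (fun s => f₂ ρt s) st = 0 := by rw [e2]; simp
  -- d3
  have hd3' : HasDerivAt (fun s : ℝ => Real.sin (2 * Real.sqrt (2/5) * s))
      (Real.cos (2 * Real.sqrt (2/5) * st) * (2 * Real.sqrt (2/5))) st := by
    simpa using ((hasDerivAt_id st).const_mul (2 * Real.sqrt (2/5))).sin
  have hd3 : HasDerivAt (fun s => f₁ ρt s)
      ((5 - 4 * ρt ^ 2) * (Real.cos (2 * Real.sqrt (2/5) * st) * (2 * Real.sqrt (2/5))) /
        (10 * Real.sqrt 10)) st := by
    have := (hd3'.const_mul (5 - 4 * ρt ^ 2)).div_const (10 * Real.sqrt 10)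
    simpa only [← hf₁ ρt] using this
  have d3 : deriv (fun s => f₁ ρt s) st =
      (5 - 4 * ρt ^ 2) * (2 * Real.sqrt (2/5)) / (10 * Real.sqrt 10) := by
    rw [hd3.deriv, hcos]; ring
  -- d4
  have hn : HasDerivAt (fun ρ : ℝ => (5 - 12 * ρ ^ 2) * Real.cos (2 * Real.sqrt (2/5) * st))
      ((-(24 * ρt)) * Real.cos (2 * Real.sqrt (2/5) * st)) ρt := by
    have h2 : HasDerivAt (fun ρ : ℝ => 5 - 12 * ρ ^ 2) (-(24 * ρt)) ρt := by
      have hp := hasDerivAt_pow 2 ρt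
      have h := (hp.const_mul (12:ℝ)).const_sub 5
      refine h.congr_deriv ?_
      simp; ring
    exact h2.mul_const _
  have hden : HasDerivAt (fun ρ : ℝ => 40 * ρ) 40 ρt := by
    simpa using (hasDerivAt_id ρt).const_mul (40:ℝ)
  have hd4 : HasDerivAt (fun ρ => f₂ ρ st)
      (((-(24 * ρt)) * Real.cos (2 * Real.sqrt (2/5) * st) * (40 * ρt) -
        (5 - 12 * ρt ^ 2) * Real.cos (2 * Real.sqrt (2/5) * st) * 40) / (40 * ρt) ^ 2) ρt := by
    have := hn.div hden (by positivity : (40 * ρt) ≠ 0)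
    simpa only [Pi.div_def, ← hf₂] using this
  have d4 : deriv (fun ρ => f₂ ρ st) ρt = -(3/5 : ℝ) := by
    rw [hd4.deriv, hcos, hnum0]
    field_simp
    ring
  rw [d1, d2, d3, d4, hρ2]
  have hs1 : 0 < Real.sqrt (2/5) := by positivity
  have hs2 : 0 < Real.sqrt 10 := by positivity
  have : (0:ℝ) < (5 - 4 * (5/12)) * (2 * Real.sqrt (2/5)) / (10 * Real.sqrt 10) := by
    positivity
  intro hcon
  nlinarith
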